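/- Let k, t, r be reproducing kernels on nonempty sets X, Y, Z with t and r nonzero. If φ : X → Y is a composition factor of k with t and ψ : Y → Z is a composition factor of t with r, then ψ∘φ is a composition factor of k with r. In particular, the set Fact(k) of composition factors of a nonzero kernel k with itself is closed under composition (forms a semigroup). -/

import Mathlib

/-- Positive semidefinite kernel. -/
def IsPSDKernel {X : Type*} (k : X → X → ℂ) : Prop :=
  ∀ (n : ℕ) (x : Fin n → X) (c : Fin n → ℂ),
    0 ≤ (∑ i, ∑ j, starRingEnd ℂ (c i) * k (x i) (x j) * c j).re ∧
    (∑ i, ∑ j, starRingEnd ℂ (c i) * k (x i) (x j) * c j).im = 0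

/-- `φ : X → Y` is a composition factor of `k` with `t` (for `t` nonzero). -/
def IsCompFactor {X Y : Type*} (k : X → X → ℂ) (t : Y → Y → ℂ) (φ : X → Y) : Prop :=
  IsPSDKernel (fun x y => k x y / t (φ x) (φ y))

open Matrix in
lemma herm_of_real_quad {n : ℕ} (M : Matrix (Fin n) (Fin n) ℂ)
    (h : ∀ c : Fin n → ℂ, starRingEnd ℂ (star c ⬝ᵥ M *ᵥ c) = star c ⬝ᵥ M *ᵥ c) :
    M.IsHermitian := by
  rw [Matrix.isHermitian_iff_isSymmetric, LinearMap.isSymmetric_iff_inner_map_self_real]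
  intro v
  obtain ⟨c, rfl⟩ := (WithLp.equiv 2 (Fin n → ℂ)).symm.surjective v
  simp only [WithLp.equiv_symm_apply, Matrix.toEuclideanLin_apply_piLp_toLp, EuclideanSpace.inner_toLp_toLp,
    dotProduct_comm c]
  have key : star (M *ᵥ c) ⬝ᵥ c = starRingEnd ℂ (star c ⬝ᵥ M *ᵥ c) := by
    rw [Matrix.star_dotProduct]; rfl
  rw [key]
  simp only [h c]

open Matrix in
lemma quad_eq {n : ℕ} (M : Matrix (Fin n) (Fin n) ℂ) (c : Fin n → ℂ) :
    star c ⬝ᵥ M *ᵥ c = ∑ i, ∑ j, starRingEnd ℂ (c i) * M i j * c j := by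
  simp only [dotProduct, Matrix.mulVec, Pi.star_apply, Finset.mul_sum,
    starRingEnd_apply]
  exact Finset.sum_congr rfl fun i _ => Finset.sum_congr rfl fun j _ => by ring

open Matrix ComplexOrder in
lemma psd_matrix_of_kernel {X : Type*} {k : X → X → ℂ} (hk : IsPSDKernel k)
    {n : ℕ} (x : Fin n → X) :
    (Matrix.of fun i j => k (x i) (x j) : Matrix (Fin n) (Fin n) ℂ).PosSemidef := by
  have hq : ∀ c : Fin n → ℂ, star c ⬝ᵥ (Matrix.of fun i j => k (x i) (x j)) *ᵥ c
      = ∑ i, ∑ j, starRingEnd ℂ (c i) * k (x i) (x j) * c j := fun c => quad_eq _ c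
  refine Matrix.PosSemidef.of_dotProduct_mulVec_nonneg ?_ ?_
  · apply herm_of_real_quad
    intro c
    rw [hq c, Complex.conj_eq_iff_im]
    exact (hk n x c).2
  · intro c
    rw [hq c]
    rw [Complex.le_def]
    refine ⟨by simpa using (hk n x c).1, by simpa using (hk n x c).2.symm⟩

/-- Schur product theorem at the kernel level. -/
lemma IsPSDKernel.mul {X : Type*} {k t : X → X → ℂ}
    (hk : IsPSDKernel k) (ht : IsPSDKernel t) :
    IsPSDKernel (fun x y => k x y * t x y) := by
  intro n x c
  obtain ⟨U, hU⟩ : ∃ U : Matrix (Fin n) (Fin n) ℂ, (Matrix.of fun i j => k (x i) (x j)) = U.conjTranspose * U := by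
    open scoped MatrixOrder in
    obtain ⟨U, hU⟩ := CStarAlgebra.nonneg_iff_eq_star_mul_self.mp (psd_matrix_of_kernel hk x).nonneg
    exact ⟨U, hU⟩
  obtain ⟨V, hV⟩ : ∃ V : Matrix (Fin n) (Fin n) ℂ, (Matrix.of fun i j => t (x i) (x j)) = V.conjTranspose * V := by
    open scoped MatrixOrder in
    obtain ⟨V, hV⟩ := CStarAlgebra.nonneg_iff_eq_star_mul_self.mp (psd_matrix_of_kernel ht x).nonneg
    exact ⟨V, hV⟩
  have hkU : ∀ i j, k (x i) (x j) = ∑ l, starRingEnd ℂ (U l i) * U l j := by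
    intro i j
    have h := congrFun (congrFun hU i) j
    rw [Matrix.mul_apply] at h
    simp only [Matrix.conjTranspose_apply, Matrix.of_apply] at h
    simpa only [starRingEnd_apply] using h
  have htV : ∀ i j, t (x i) (x j) = ∑ m, starRingEnd ℂ (V m i) * V m j := by
    intro i j
    have h := congrFun (congrFun hV i) j
    rw [Matrix.mul_apply] at h
    simp only [Matrix.conjTranspose_apply, Matrix.of_apply] at h
    simpa only [starRingEnd_apply] using h
  set s : Fin n → Fin n → ℂ := fun l m => ∑ j, c j * U l j * V m j with hs
  have main : (∑ i, ∑ j, starRingEnd ℂ (c i) * (k (x i) (x j) * t (x i) (x j)) * c j)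
      = ∑ l, ∑ m, starRingEnd ℂ (s l m) * s l m := by
    have expand : ∀ i j, starRingEnd ℂ (c i) * (k (x i) (x j) * t (x i) (x j)) * c j
        = ∑ l, ∑ m, starRingEnd ℂ (c i * U l i * V m i) * (c j * U l j * V m j) := by
      intro i j
      rw [hkU i j, htV i j]
      simp only [Finset.mul_sum, Finset.sum_mul, map_mul]
      rw [Finset.sum_comm]
      refine Finset.sum_congr rfl fun l _ => Finset.sum_congr rfl fun m _ => by ring
    calc (∑ i, ∑ j, starRingEnd ℂ (c i) * (k (x i) (x j) * t (x i) (x j)) * c j)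
        = ∑ i, ∑ j, ∑ l, ∑ m,
            starRingEnd ℂ (c i * U l i * V m i) * (c j * U l j * V m j) := by
          exact Finset.sum_congr rfl fun i _ => Finset.sum_congr rfl fun j _ => expand i j
      _ = ∑ i, ∑ l, ∑ j, ∑ m,
            starRingEnd ℂ (c i * U l i * V m i) * (c j * U l j * V m j) := by
          exact Finset.sum_congr rfl fun i _ => Finset.sum_comm
      _ = ∑ l, ∑ i, ∑ j, ∑ m,
            starRingEnd ℂ (c i * U l i * V m i) * (c j * U l j * V m j) := Finset.sum_comm
      _ = ∑ l, ∑ i, ∑ m, ∑ j,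
            starRingEnd ℂ (c i * U l i * V m i) * (c j * U l j * V m j) := by
          exact Finset.sum_congr rfl fun l _ => Finset.sum_congr rfl fun i _ => Finset.sum_comm
      _ = ∑ l, ∑ m, ∑ i, ∑ j,
            starRingEnd ℂ (c i * U l i * V m i) * (c j * U l j * V m j) := by
          exact Finset.sum_congr rfl fun l _ => Finset.sum_comm
      _ = ∑ l, ∑ m, starRingEnd ℂ (s l m) * s l m := by
          refine Finset.sum_congr rfl fun l _ => Finset.sum_congr rfl fun m _ => ?_
          rw [hs]
          rw [map_sum, Finset.sum_mul_sum]
  have real_eq : (∑ l, ∑ m, starRingEnd ℂ (s l m) * s l m)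
      = ((∑ l, ∑ m, Complex.normSq (s l m) : ℝ) : ℂ) := by
    push_cast
    refine Finset.sum_congr rfl fun l _ => Finset.sum_congr rfl fun m _ => ?_
    rw [mul_comm, Complex.mul_conj]
  rw [main, real_eq]
  constructor
  · simp only [Complex.ofReal_re]
    refine Finset.sum_nonneg fun l _ => Finset.sum_nonneg fun m _ => Complex.normSq_nonneg _
  · simp

lemma IsPSDKernel.comp {Y X : Type*} {g : Y → Y → ℂ} (hg : IsPSDKernel g) (φ : X → Y) :
    IsPSDKernel (fun a b => g (φ a) (φ b)) :=
  fun n x c => hg n (φ ∘ x) c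

/-- composition factors compose: if `φ ∈ Fact(k,t)` and `ψ ∈ Fact(t,r)`
(with `t`, `r` nonzero), then `ψ ∘ φ ∈ Fact(k,r)`.  In particular, taking `k = t = r`,
the set `Fact(k)` of composition factors of a nonzero kernel `k` with itself is closed
under composition, i.e. forms a semigroup. -/
theorem compFactor_comp
    {X Y Z : Type*} [Nonempty X] [Nonempty Y] [Nonempty Z]
    (k : X → X → ℂ) (t : Y → Y → ℂ) (r : Z → Z → ℂ)
    (hk : IsPSDKernel k) (ht : IsPSDKernel t) (hr : IsPSDKernel r)
    (htne : ∀ y y' : Y, t y y' ≠ 0) (hrne : ∀ z z' : Z, r z z' ≠ 0)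
    (φ : X → Y) (ψ : Y → Z)
    (hφ : IsCompFactor k t φ) (hψ : IsCompFactor t r ψ) :
    IsCompFactor k r (ψ ∘ φ) := by
  unfold IsCompFactor at *
  have h2 : IsPSDKernel (fun a b : X => t (φ a) (φ b) / r (ψ (φ a)) (ψ (φ b))) :=
    hψ.comp φ
  have h3 := hφ.mul h2
  have heq : (fun a b : X => k a b / t (φ a) (φ b) * (t (φ a) (φ b) / r (ψ (φ a)) (ψ (φ b))))
      = fun a b : X => k a b / r ((ψ ∘ φ) a) ((ψ ∘ φ) b) := by
    funext a b
    field_simp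
    rw [mul_comm (k a b) (t (φ a) (φ b)), mul_div_mul_left _ _ (htne _ _)]
    rfl
  rwa [heq] at h3
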